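/- Let Ω = {M ∈ ℝ^{d×d} : M ⪰ 0, ‖M‖_F ≤ R} with R > 0. For any symmetric matrix M, the Euclidean (Frobenius) projection of M onto Ω equals M'/max(‖M'‖_F/R, 1), where M' = P(M) is the projection of M onto the cone of positive semidefinite matrices. -/

import Mathlib

/-- Frobenius norm of a real matrix. -/
noncomputable def frobNorm {d : ℕ} (M : Matrix (Fin d) (Fin d) ℝ) : ℝ :=
  Real.sqrt (∑ i, ∑ j, (M i j) ^ 2)

namespace ProjAux

variable {d : ℕ}

noncomputable def F (A : Matrix (Fin d) (Fin d) ℝ) : ℝ := ∑ i, ∑ j, (A i j) ^ 2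

noncomputable def ip (A B : Matrix (Fin d) (Fin d) ℝ) : ℝ := ∑ i, ∑ j, A i j * B i j

lemma F_nonneg (A : Matrix (Fin d) (Fin d) ℝ) : 0 ≤ F A := by
  apply Finset.sum_nonneg; intro i _; apply Finset.sum_nonneg; intro j _; positivity

lemma frob_eq (A : Matrix (Fin d) (Fin d) ℝ) : frobNorm A = Real.sqrt (F A) := rfl

lemma frob_sq (A : Matrix (Fin d) (Fin d) ℝ) : frobNorm A ^ 2 = F A := by
  rw [frob_eq, Real.sq_sqrt (F_nonneg A)]

lemma frob_nonneg (A : Matrix (Fin d) (Fin d) ℝ) : 0 ≤ frobNorm A := Real.sqrt_nonneg _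

lemma frob_le_frob {A B : Matrix (Fin d) (Fin d) ℝ} (h : F A ≤ F B) :
    frobNorm A ≤ frobNorm B := Real.sqrt_le_sqrt h

lemma F_le_F {A B : Matrix (Fin d) (Fin d) ℝ} (h : frobNorm A ≤ frobNorm B) : F A ≤ F B := by
  rw [← frob_sq, ← frob_sq]; exact pow_le_pow_left₀ (frob_nonneg A) h 2

lemma F_add (A B : Matrix (Fin d) (Fin d) ℝ) :
    F (A + B) = F A + 2 * ip A B + F B := by
  simp only [F, ip, Matrix.add_apply, add_sq, Finset.sum_add_distrib, Finset.mul_sum, mul_assoc]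

lemma F_smul (c : ℝ) (A : Matrix (Fin d) (Fin d) ℝ) : F (c • A) = c ^ 2 * F A := by
  simp only [F, Matrix.smul_apply, smul_eq_mul, mul_pow, Finset.mul_sum]

lemma ip_smul_left (c : ℝ) (A B : Matrix (Fin d) (Fin d) ℝ) :
    ip (c • A) B = c * ip A B := by
  simp only [ip, Matrix.smul_apply, smul_eq_mul, Finset.mul_sum, mul_assoc]

lemma ip_smul_right (c : ℝ) (A B : Matrix (Fin d) (Fin d) ℝ) :
    ip A (c • B) = c * ip A B := by
  simp only [ip, Matrix.smul_apply, smul_eq_mul, Finset.mul_sum]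
  congr 1; ext i; congr 1; ext j; ring

lemma ip_sub_left (A B C : Matrix (Fin d) (Fin d) ℝ) :
    ip (A - B) C = ip A C - ip B C := by
  simp only [ip, Matrix.sub_apply, sub_mul, Finset.sum_sub_distrib]

/-- Cauchy-Schwarz for ip. -/
lemma ip_le (A B : Matrix (Fin d) (Fin d) ℝ) : ip A B ≤ frobNorm A * frobNorm B := by
  have h : ip A B ^ 2 ≤ F A * F B := by
    have := Finset.sum_mul_sq_le_sq_mul_sq (Finset.univ : Finset (Fin d × Fin d))
      (fun p => A p.1 p.2) (fun p => B p.1 p.2)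
    simpa only [ip, F, Fintype.sum_prod_type] using this
  have h2 : ip A B ≤ Real.sqrt (F A * F B) := by
    have := Real.sqrt_le_sqrt h
    rw [Real.sqrt_sq_eq_abs] at this
    exact (le_abs_self _).trans this
  rwa [Real.sqrt_mul (F_nonneg A), ← frob_eq, ← frob_eq] at h2

lemma psd_smul {c : ℝ} (hc : 0 ≤ c) {A : Matrix (Fin d) (Fin d) ℝ} (hA : A.PosSemidef) :
    (c • A).PosSemidef := by
  constructor
  · show (c • A).conjTranspose = c • A
    rw [Matrix.conjTranspose_smul, hA.1.eq]
    norm_num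
  · intro x
    have := hA.2 x
    have h2 := mul_nonneg hc this
    simp only [Finsupp.sum, Finset.mul_sum] at h2 ⊢
    simp only [Matrix.smul_apply, smul_eq_mul]
    convert h2 using 2 with i _ j _
    ring

end ProjAux

open ProjAux in
theorem projection_onto_PSD_ball {d : ℕ} (R : ℝ) (hR : 0 < R)
    (M M' : Matrix (Fin d) (Fin d) ℝ) (hM : M.IsSymm)
    (hM'psd : M'.PosSemidef)
    (hM'proj : ∀ X : Matrix (Fin d) (Fin d) ℝ, X.PosSemidef →
      frobNorm (M' - M) ≤ frobNorm (X - M)) :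
    ((1 / max (frobNorm M' / R) 1) • M').PosSemidef ∧
    frobNorm ((1 / max (frobNorm M' / R) 1) • M') ≤ R ∧
    ∀ X : Matrix (Fin d) (Fin d) ℝ, X.PosSemidef → frobNorm X ≤ R →
      frobNorm ((1 / max (frobNorm M' / R) 1) • M' - M) ≤ frobNorm (X - M) := by
  set n : ℝ := frobNorm M' with hn
  set c : ℝ := 1 / max (n / R) 1 with hc
  have hmax1 : (1:ℝ) ≤ max (n / R) 1 := le_max_right _ _
  have hmaxpos : (0:ℝ) < max (n / R) 1 := lt_of_lt_of_le one_pos hmax1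
  have hc_pos : 0 < c := by positivity
  have hc_le : c ≤ 1 := by
    rw [hc, div_le_one hmaxpos]; exact hmax1
  -- variational inequality: for PSD X, 0 ≤ ip X (M' - M)
  have key : ∀ X : Matrix (Fin d) (Fin d) ℝ, X.PosSemidef → 0 ≤ ip (X - M') (M' - M) := by
    intro X hX
    by_contra hneg
    push_neg at hneg
    set A : Matrix (Fin d) (Fin d) ℝ := M' - M
    set B : Matrix (Fin d) (Fin d) ℝ := X - M'
    have hstep : ∀ t : ℝ, 0 < t → t ≤ 1 → 0 ≤ 2 * ip B A + t * F B := by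
      intro t ht ht1
      have hpsd : (M' + t • B).PosSemidef := by
        have : M' + t • B = (1 - t) • M' + t • X := by
          simp only [B]; module
        rw [this]
        exact (psd_smul (by linarith) hM'psd).add (psd_smul ht.le hX)
      have hle := F_le_F (hM'proj _ hpsd)
      have heq : M' + t • B - M = A + t • B := by simp only [A, B]; abel
      rw [heq, F_add, ip_smul_right, F_smul] at hle
      have hBA : ip A B = ip B A := by
        simp only [ip]; congr 1; ext i; congr 1; ext j; ring
      rw [hBA] at hle
      nlinarith [F_nonneg B]
    have hFB : 0 ≤ F B := F_nonneg B
    rcases eq_or_lt_of_le hFB with hFB0 | hFBpos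
    · have := hstep 1 one_pos le_rfl
      rw [← hFB0] at this; linarith
    · set t := min 1 (-ip B A / F B) with htdef
      have htpos : 0 < t := lt_min one_pos (div_pos (by linarith) hFBpos)
      have ht1 : t ≤ 1 := min_le_left _ _
      have := hstep t htpos ht1
      have htle : t * F B ≤ -ip B A := by
        have : t ≤ -ip B A / F B := min_le_right _ _
        calc t * F B ≤ (-ip B A / F B) * F B := by nlinarith
          _ = -ip B A := by field_simp
      linarith
  have horth : ip M' (M' - M) = 0 := by
    have h0 := key 0 Matrix.PosSemidef.zero
    have h2 := key ((2:ℝ) • M') (psd_smul (by norm_num) hM'psd)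
    rw [ip_sub_left] at h0 h2
    rw [ip_smul_left] at h2
    have hz : ip (0 : Matrix (Fin d) (Fin d) ℝ) (M' - M) = 0 := by
      simp [ip]
    rw [hz] at h0
    linarith
  have keyX : ∀ X : Matrix (Fin d) (Fin d) ℝ, X.PosSemidef → 0 ≤ ip X (M' - M) := by
    intro X hX
    have := key X hX
    rw [ip_sub_left, horth] at this
    linarith
  refine ⟨psd_smul hc_pos.le hM'psd, ?_, ?_⟩
  · -- norm bound
    have : frobNorm (c • M') = c * n := by
      rw [frob_eq, F_smul, Real.sqrt_mul (by positivity), Real.sqrt_sq hc_pos.le, ← frob_eq]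
    rw [this]
    rcases le_total (n / R) 1 with h | h
    · have : c = 1 := by rw [hc, max_eq_right h]; norm_num
      rw [this, one_mul]
      have := frob_nonneg M'
      calc n = (n / R) * R := by field_simp
        _ ≤ 1 * R := by nlinarith
        _ = R := one_mul R
    · have hcv : c = R / n := by
        rw [hc, max_eq_left h]
        field_simp
      have hnpos : 0 < n := by
        by_contra hnp; push_neg at hnp
        have : n / R ≤ 0 := div_nonpos_of_nonpos_of_nonneg hnp hR.le
        linarith
      rw [hcv]; field_simp; exact le_rfl
  · -- main inequality
    intro X hX hXR
    apply frob_le_frob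
    have hLHS : F (c • M' - M) = (c - 1) ^ 2 * F M' + F (M' - M) := by
      have heq : c • M' - M = (c - 1) • M' + (M' - M) := by module
      rw [heq, F_add, ip_smul_left, horth, F_smul, ← frob_sq M', ← hn]
      ring
    have hRHS : F (X - M) = F (X - M') + 2 * ip (X - M') (M' - M) + F (M' - M) := by
      have heq : X - M = (X - M') + (M' - M) := by abel
      rw [heq, F_add]
    rw [hLHS, hRHS]
    have h1 : 0 ≤ ip (X - M') (M' - M) := key X hX
    have h2 : (c - 1) ^ 2 * F M' ≤ F (X - M') := by
      rcases le_total (n / R) 1 with h | h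
      · have : c = 1 := by rw [hc, max_eq_right h]; norm_num
        rw [this]
        simpa using F_nonneg (X - M')
      · have hnpos : 0 < n := by
          by_contra hnp; push_neg at hnp
          have : n / R ≤ 0 := div_nonpos_of_nonpos_of_nonneg hnp hR.le
          linarith
        have hRn : R ≤ n := by
          have := (one_le_div hR).mp h; linarith
        have hcv : c = R / n := by
          rw [hc, max_eq_left h]; field_simp
        -- (c-1)^2 * n^2 = (n - R)^2
        have hlhs : (c - 1) ^ 2 * F M' = (n - R) ^ 2 := by
          rw [hcv, ← frob_sq M', ← hn]
          field_simp
          ring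
        rw [hlhs]
        -- F (X - M') = F X - 2 ip X M' + F M' ≥ (frobNorm X - n)^2 ≥ (n - R)^2
        have hexp : F (X - M') = F X - 2 * ip X M' + F M' := by
          have heq : X - M' = X + (-1 : ℝ) • M' := by module
          rw [heq, F_add, ip_smul_right, F_smul]
          ring
        have hCS : ip X M' ≤ frobNorm X * n := ip_le X M'
        have hXn : 0 ≤ frobNorm X := frob_nonneg X
        have : (frobNorm X - n) ^ 2 ≤ F (X - M') := by
          rw [hexp, ← frob_sq X, ← frob_sq M', ← hn]
          nlinarith
        nlinarith
    linarith
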